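/- Let n ∈ ℕ and numbers c_{j,k} for j,k ∈ {0,…,n} satisfy: (1) c_{j,k} = c_{j+r,k+r} whenever j+k = n−r with r ∈ {1,…,n}; (2) c_{j,k} = c_{n−j,k} for j ≥ k; (3) c_{j,k} = c_{k,j}. Then for any function f : ℕ → ℝ, ∑_{j,k=0}^{n} c_{j,k}·f(|j−k|) = ∑_{j,k=0}^{n} c_{j,k}·f(|n−j−k|) = f(0)·∑_{u=0}^{n} c_{u,u} + 2∑_{r=1}^{n} f(r)·∑_{u=0}^{n−r} c_{r+u,u}. -/

import Mathlib

open Finset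

lemma square_split (n : ℕ) (F : ℕ → ℕ → ℝ) :
    ∑ j ∈ range (n+1), ∑ k ∈ range (n+1), F j k
      = ∑ u ∈ range (n+1), F u u
        + ∑ r ∈ Icc 1 n, ∑ u ∈ range (n - r + 1), F (r + u) u
        + ∑ r ∈ Icc 1 n, ∑ u ∈ range (n - r + 1), F u (r + u) := by
  rw [← Finset.sum_product']
  rw [← Finset.sum_filter_add_sum_filter_not ((range (n+1)) ×ˢ (range (n+1)))
      (fun p => p.1 = p.2)]
  rw [← Finset.sum_filter_add_sum_filter_not
      (((range (n+1)) ×ˢ (range (n+1))).filter (fun p => ¬ p.1 = p.2))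
      (fun p => p.2 < p.1)]
  rw [add_assoc]
  congr 1
  · apply Finset.sum_nbij' (fun p => p.1) (fun u => (u, u)) <;>
      simp (config := {contextual := true}) [Finset.mem_filter] <;> omega
  congr 1
  · rw [Finset.sum_sigma']
    apply Finset.sum_nbij' (fun p => (⟨p.1 - p.2, p.2⟩ : Σ _ : ℕ, ℕ))
        (fun x => (x.1 + x.2, x.2))
    · intro a ha
      simp only [Finset.mem_filter, Finset.mem_product, Finset.mem_range] at ha
      simp only [Finset.mem_sigma, Finset.mem_Icc, Finset.mem_range]
      refine ⟨⟨?_, ?_⟩, ?_⟩ <;> omega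
    · intro a ha
      simp only [Finset.mem_sigma, Finset.mem_Icc, Finset.mem_range] at ha
      simp only [Finset.mem_filter, Finset.mem_product, Finset.mem_range]
      omega
    · intro a ha
      simp only [Finset.mem_filter, Finset.mem_product, Finset.mem_range] at ha
      ext <;> simp <;> omega
    · intro a ha
      simp only [Finset.mem_sigma, Finset.mem_Icc, Finset.mem_range] at ha
      ext <;> simp <;> omega
    · intro a ha
      simp only [Finset.mem_filter, Finset.mem_product, Finset.mem_range] at ha
      dsimp only
      congr 1
      omega
  · rw [Finset.sum_sigma']
    apply Finset.sum_nbij' (fun p => (⟨p.2 - p.1, p.1⟩ : Σ _ : ℕ, ℕ))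
        (fun x => (x.2, x.1 + x.2))
    · intro a ha
      simp only [Finset.mem_filter, Finset.mem_product, Finset.mem_range] at ha
      simp only [Finset.mem_sigma, Finset.mem_Icc, Finset.mem_range]
      refine ⟨⟨?_, ?_⟩, ?_⟩ <;> omega
    · intro a ha
      simp only [Finset.mem_sigma, Finset.mem_Icc, Finset.mem_range] at ha
      simp only [Finset.mem_filter, Finset.mem_product, Finset.mem_range]
      omega
    · intro a ha
      simp only [Finset.mem_filter, Finset.mem_product, Finset.mem_range] at ha
      ext <;> simp <;> omega
    · intro a ha
      simp only [Finset.mem_sigma, Finset.mem_Icc, Finset.mem_range] at ha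
      ext <;> simp <;> omega
    · intro a ha
      simp only [Finset.mem_filter, Finset.mem_product, Finset.mem_range] at ha
      dsimp only
      congr 1
      omega

theorem permutation_lemma (n : ℕ) (c : ℕ → ℕ → ℝ)
    (h1 : ∀ j k r : ℕ, 1 ≤ r → r ≤ n → j + k = n - r → c j k = c (j + r) (k + r))
    (h2 : ∀ j k : ℕ, j ≤ n → k ≤ n → k ≤ j → c j k = c (n - j) k)
    (h3 : ∀ j k : ℕ, c j k = c k j)
    (f : ℕ → ℝ) :
    (∑ j ∈ Finset.range (n + 1), ∑ k ∈ Finset.range (n + 1),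
        c j k * f ((j : ℤ) - k).natAbs
      = ∑ j ∈ Finset.range (n + 1), ∑ k ∈ Finset.range (n + 1),
        c j k * f ((n : ℤ) - j - k).natAbs) ∧
    (∑ j ∈ Finset.range (n + 1), ∑ k ∈ Finset.range (n + 1),
        c j k * f ((j : ℤ) - k).natAbs
      = f 0 * ∑ u ∈ Finset.range (n + 1), c u u
        + 2 * ∑ r ∈ Finset.Icc 1 n, f r * ∑ u ∈ Finset.range (n - r + 1), c (r + u) u) := by
  have flip : ∀ j k : ℕ, j ≤ n → k ≤ n → c j (n - k) = c j k := by
    intro j k hj hk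
    rcases le_or_gt j k with h | h
    · rw [h3 j (n-k), h3 j k]
      exact (h2 k j hk hj h).symm
    · rcases le_or_gt j (n - k) with h' | h'
      · rw [h3 j (n-k), h2 (n-k) j (by omega) hj h']
        have : n - (n - k) = k := by omega
        rw [this, h3 k j]
      · rw [h2 j (n-k) hj (by omega) (le_of_lt h'), h3 (n-j) (n-k),
            h2 (n-k) (n-j) (by omega) (by omega) (by omega)]
        have : n - (n - k) = k := by omega
        rw [this, h3 k (n-j), h2 j k hj hk (le_of_lt h)]
  constructor
  · apply Finset.sum_congr rfl
    intro j hj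
    simp only [Finset.mem_range] at hj
    apply Finset.sum_nbij' (fun k => n - k) (fun k => n - k)
    · intro a ha; simp only [Finset.mem_range] at *; omega
    · intro a ha; simp only [Finset.mem_range] at *; omega
    · intro a ha; simp only [Finset.mem_range] at ha; omega
    · intro a ha; simp only [Finset.mem_range] at ha; omega
    · intro k hk
      simp only [Finset.mem_range] at hk
      rw [flip j k (by omega) (by omega)]
      congr 2
      have : ((n - k : ℕ) : ℤ) = (n : ℤ) - k := by omega
      rw [this]
      omega
  · rw [square_split n (fun j k => c j k * f ((j : ℤ) - k).natAbs)]
    have e1 : ∀ u : ℕ, c u u * f ((u : ℤ) - u).natAbs = c u u * f 0 := by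
      intro u; norm_num
    have e2 : ∀ r u : ℕ, c (r+u) u * f (((r+u : ℕ) : ℤ) - u).natAbs = c (r+u) u * f r := by
      intro r u; congr 2; push_cast; omega
    have e3 : ∀ r u : ℕ, c u (r+u) * f ((u : ℤ) - (r+u : ℕ)).natAbs = c (r+u) u * f r := by
      intro r u; rw [h3 u (r+u)]; congr 2; push_cast; omega
    simp only [e1, e2, e3]
    have hS : ∑ r ∈ Icc 1 n, ∑ u ∈ range (n-r+1), c (r+u) u * f r
        = ∑ r ∈ Icc 1 n, f r * ∑ u ∈ range (n-r+1), c (r+u) u := by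
      apply Finset.sum_congr rfl
      intro r _
      rw [Finset.mul_sum]
      apply Finset.sum_congr rfl
      intro u _
      ring
    rw [hS, ← Finset.sum_mul]
    ring
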